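/- Let n be a real number with n ≥ −1 and n ≠ 0, and define K on the open set U = {(x, y) ∈ ℝ² : |y| < x} by K(x, y) = sgn(n)·xⁿ/(x² − y²)ⁿ. Then the Hessian matrix of K (the 2×2 matrix of second partial derivatives) is positive semidefinite at every point of U. -/

import Mathlib

open Real

/-- Partial derivative with respect to the first variable. -/
noncomputable def pdx (f : ℝ × ℝ → ℝ) (p : ℝ × ℝ) : ℝ := fderiv ℝ f p (1, 0)

/-- Partial derivative with respect to the second variable. -/
noncomputable def pdy (f : ℝ × ℝ → ℝ) (p : ℝ × ℝ) : ℝ := fderiv ℝ f p (0, 1)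

/-- The Hessian matrix of second partial derivatives. -/
noncomputable def hessian (f : ℝ × ℝ → ℝ) (p : ℝ × ℝ) : Matrix (Fin 2) (Fin 2) ℝ :=
  !![pdx (pdx f) p, pdx (pdy f) p;
     pdy (pdx f) p, pdy (pdy f) p]

/-- A linear map `ℝ² → ℝ` given by its two coefficients. -/
noncomputable def lm (a b : ℝ) : ℝ × ℝ →L[ℝ] ℝ :=
  a • ContinuousLinearMap.fst ℝ ℝ ℝ + b • ContinuousLinearMap.snd ℝ ℝ ℝ

@[simp] lemma lm_apply (a b : ℝ) (v : ℝ × ℝ) : lm a b v = a * v.1 + b * v.2 := by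
  simp [lm, mul_comm]

lemma lm_ext {L : ℝ × ℝ →L[ℝ] ℝ} {a b : ℝ} (h1 : L (1, 0) = a) (h2 : L (0, 1) = b) :
    L = lm a b := by
  apply ContinuousLinearMap.ext
  intro v
  have hv : v = v.1 • ((1 : ℝ), (0 : ℝ)) + v.2 • ((0 : ℝ), (1 : ℝ)) := by
    ext <;> simp
  rw [hv, map_add, map_smul, map_smul, h1, h2]
  simp [mul_comm]

/-- Derivative of `r ↦ N r / (r₁² - r₂²)^m` on the region. -/
lemma key_div (N Nx Ny : ℝ × ℝ → ℝ) (m : ℝ) (q : ℝ × ℝ)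
    (hx : 0 < q.1) (hw : 0 < q.1 ^ 2 - q.2 ^ 2)
    (hN : HasFDerivAt N (lm (Nx q) (Ny q)) q) :
    HasFDerivAt (fun r : ℝ × ℝ => N r / (r.1 ^ 2 - r.2 ^ 2) ^ m)
      (lm ((Nx q * (q.1 ^ 2 - q.2 ^ 2) - 2 * m * q.1 * N q) / (q.1 ^ 2 - q.2 ^ 2) ^ (m + 1))
          ((Ny q * (q.1 ^ 2 - q.2 ^ 2) + 2 * m * q.2 * N q) / (q.1 ^ 2 - q.2 ^ 2) ^ (m + 1))) q := by
  have hw1 : q.1 ^ 2 - q.2 ^ 2 ≠ 0 := hw.ne'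
  have hWm : (0:ℝ) < (q.1 ^ 2 - q.2 ^ 2) ^ m := rpow_pos_of_pos hw m
  have hWm1 : (0:ℝ) < (q.1 ^ 2 - q.2 ^ 2) ^ (m - 1) := rpow_pos_of_pos hw _
  have hfst : HasFDerivAt (fun r : ℝ × ℝ => r.1) (ContinuousLinearMap.fst ℝ ℝ ℝ) q :=
    hasFDerivAt_fst
  have hsnd : HasFDerivAt (fun r : ℝ × ℝ => r.2) (ContinuousLinearMap.snd ℝ ℝ ℝ) q :=
    hasFDerivAt_snd
  have hx2 : HasFDerivAt (fun r : ℝ × ℝ => r.1 ^ 2)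
      (((2 : ℕ) * q.1 ^ 1 : ℝ) • ContinuousLinearMap.fst ℝ ℝ ℝ) q :=
    (hasDerivAt_pow 2 q.1).comp_hasFDerivAt q hfst
  have hy2 : HasFDerivAt (fun r : ℝ × ℝ => r.2 ^ 2)
      (((2 : ℕ) * q.2 ^ 1 : ℝ) • ContinuousLinearMap.snd ℝ ℝ ℝ) q :=
    (hasDerivAt_pow 2 q.2).comp_hasFDerivAt q hsnd
  have hwd := hx2.sub hy2
  have hwm := (Real.hasDerivAt_rpow_const (p := m) (Or.inl hw1)).comp_hasFDerivAt q hwd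
  have hinv := (hasDerivAt_inv hWm.ne').comp_hasFDerivAt q hwm
  have hall := hN.mul hinv
  have hfun : (fun r : ℝ × ℝ => N r / (r.1 ^ 2 - r.2 ^ 2) ^ m)
      = fun r : ℝ × ℝ => N r * ((fun t : ℝ => t⁻¹) ∘ fun r : ℝ × ℝ => (r.1 ^ 2 - r.2 ^ 2) ^ m) r := by
    funext r
    simp [Function.comp, div_eq_mul_inv]
  rw [hfun]
  refine hall.congr_fderiv (Eq.symm ?_)
  symm
  apply lm_ext <;>
  · simp [Function.comp]
    have hmm : (q.1 ^ 2 - q.2 ^ 2) ^ m = (q.1 ^ 2 - q.2 ^ 2) ^ (m - 1) * (q.1 ^ 2 - q.2 ^ 2) := by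
      rw [← Real.rpow_add_one hw1]; ring_nf
    have hmp : (q.1 ^ 2 - q.2 ^ 2) ^ (m + 1) = (q.1 ^ 2 - q.2 ^ 2) ^ m * (q.1 ^ 2 - q.2 ^ 2) :=
      Real.rpow_add_one hw1 m
    rw [hmp, hmm]
    field_simp
    ring

/-- Derivative of `r ↦ B * r₁^e * P r`. -/
lemma key_num (B e : ℝ) (P Px Py : ℝ × ℝ → ℝ) (q : ℝ × ℝ) (hx : 0 < q.1)
    (hP : HasFDerivAt P (lm (Px q) (Py q)) q) :
    HasFDerivAt (fun r : ℝ × ℝ => B * r.1 ^ e * P r)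
      (lm (B * (e * q.1 ^ (e - 1) * P q + q.1 ^ e * Px q)) (B * (q.1 ^ e * Py q))) q := by
  have hfst : HasFDerivAt (fun r : ℝ × ℝ => r.1) (ContinuousLinearMap.fst ℝ ℝ ℝ) q :=
    hasFDerivAt_fst
  have hxe := (Real.hasDerivAt_rpow_const (p := e) (Or.inl hx.ne')).comp_hasFDerivAt q hfst
  have hall := (hxe.const_mul B).mul hP
  have hfun : (fun r : ℝ × ℝ => B * r.1 ^ e * P r)
      = fun r : ℝ × ℝ => (B * ((fun t : ℝ => t ^ e) ∘ fun r : ℝ × ℝ => r.1) r) * P r := by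
    funext r; simp [Function.comp]
  rw [hfun]
  refine hall.congr_fderiv (Eq.symm ?_)
  symm
  apply lm_ext <;> simp [Function.comp] <;> ring

lemma hasFDerivAt_cxe (c e : ℝ) (q : ℝ × ℝ) (hx : 0 < q.1) :
    HasFDerivAt (fun r : ℝ × ℝ => c * r.1 ^ e) (lm (c * (e * q.1 ^ (e - 1))) 0) q := by
  have hfst : HasFDerivAt (fun r : ℝ × ℝ => r.1) (ContinuousLinearMap.fst ℝ ℝ ℝ) q :=
    hasFDerivAt_fst
  have hxe := (Real.hasDerivAt_rpow_const (p := e) (Or.inl hx.ne')).comp_hasFDerivAt q hfst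
  have hall := hxe.const_mul c
  have hfun : (fun r : ℝ × ℝ => c * r.1 ^ e)
      = fun r : ℝ × ℝ => c * (((fun t : ℝ => t ^ e) ∘ fun r : ℝ × ℝ => r.1) r) := by
    funext r; simp [Function.comp]
  rw [hfun]
  refine hall.congr_fderiv (Eq.symm ?_)
  symm
  apply lm_ext <;> simp [Function.comp] <;> ring

lemma hasFDerivAt_negsq (q : ℝ × ℝ) :
    HasFDerivAt (fun r : ℝ × ℝ => -(r.1 ^ 2 + r.2 ^ 2)) (lm (-(2 * q.1)) (-(2 * q.2))) q := by
  have hfst : HasFDerivAt (fun r : ℝ × ℝ => r.1) (ContinuousLinearMap.fst ℝ ℝ ℝ) q :=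
    hasFDerivAt_fst
  have hsnd : HasFDerivAt (fun r : ℝ × ℝ => r.2) (ContinuousLinearMap.snd ℝ ℝ ℝ) q :=
    hasFDerivAt_snd
  have hx2 := (hasDerivAt_pow 2 q.1).comp_hasFDerivAt q hfst
  have hy2 := (hasDerivAt_pow 2 q.2).comp_hasFDerivAt q hsnd
  have hall := (hx2.add hy2).neg
  refine hall.congr_fderiv (Eq.symm ?_)
  symm
  apply lm_ext <;> simp [Function.comp] <;> ring

lemma hasFDerivAt_2y (q : ℝ × ℝ) :
    HasFDerivAt (fun r : ℝ × ℝ => 2 * r.2) (lm 0 2) q := by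
  have hsnd : HasFDerivAt (fun r : ℝ × ℝ => r.2) (ContinuousLinearMap.snd ℝ ℝ ℝ) q :=
    hasFDerivAt_snd
  have hall := hsnd.const_mul (2:ℝ)
  refine hall.congr_fderiv (Eq.symm ?_)
  symm
  apply lm_ext <;> simp

/-- first partial derivative functions of K -/
noncomputable def F1 (c n : ℝ) (q : ℝ × ℝ) : ℝ :=
  c * n * q.1 ^ (n - 1) * (-(q.1 ^ 2 + q.2 ^ 2)) / (q.1 ^ 2 - q.2 ^ 2) ^ (n + 1)

noncomputable def F2 (c n : ℝ) (q : ℝ × ℝ) : ℝ :=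
  c * n * q.1 ^ n * (2 * q.2) / (q.1 ^ 2 - q.2 ^ 2) ^ (n + 1)

lemma rpow_shift (x e : ℝ) (hx : x ≠ 0) : x ^ e = x ^ (e - 1) * x := by
  rw [← Real.rpow_add_one hx (e - 1)]
  congr 1
  ring

lemma hasFDerivAt_K (c n : ℝ) (q : ℝ × ℝ) (hx : 0 < q.1) (hw : 0 < q.1 ^ 2 - q.2 ^ 2) :
    HasFDerivAt (fun r : ℝ × ℝ => c * r.1 ^ n / (r.1 ^ 2 - r.2 ^ 2) ^ n)
      (lm (F1 c n q) (F2 c n q)) q := by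
  have hN := hasFDerivAt_cxe c n q hx
  have h := key_div (fun r : ℝ × ℝ => c * r.1 ^ n)
      (fun q : ℝ × ℝ => c * (n * q.1 ^ (n - 1))) (fun _ : ℝ × ℝ => 0) n q hx hw hN
  convert h using 1
  have r2 : q.1 ^ n = q.1 ^ (n - 1) * q.1 := rpow_shift q.1 n hx.ne'
  symm
  apply lm_ext <;> simp [F1, F2] <;> rw [r2] <;> ring

/-- second derivative entry values (nice closed forms) -/
noncomputable def Gxx (c n : ℝ) (q : ℝ × ℝ) : ℝ :=
  c * n * q.1 ^ (n - 1 - 1) *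
    ((n + 1) * q.1 ^ 4 + (2 * n + 4) * q.1 ^ 2 * q.2 ^ 2 + (n - 1) * q.2 ^ 4) /
    (q.1 ^ 2 - q.2 ^ 2) ^ (n + 1 + 1)

noncomputable def Gxy (c n : ℝ) (q : ℝ × ℝ) : ℝ :=
  c * n * q.1 ^ (n - 1) * (-(2 * q.2) * ((n + 2) * q.1 ^ 2 + n * q.2 ^ 2)) /
    (q.1 ^ 2 - q.2 ^ 2) ^ (n + 1 + 1)

noncomputable def Gyy (c n : ℝ) (q : ℝ × ℝ) : ℝ :=
  c * n * q.1 ^ n * (2 * (q.1 ^ 2 + (2 * n + 1) * q.2 ^ 2)) /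
    (q.1 ^ 2 - q.2 ^ 2) ^ (n + 1 + 1)

lemma hasFDerivAt_F1 (c n : ℝ) (q : ℝ × ℝ) (hx : 0 < q.1) (hw : 0 < q.1 ^ 2 - q.2 ^ 2) :
    HasFDerivAt (F1 c n) (lm (Gxx c n q) (Gxy c n q)) q := by
  have hP := hasFDerivAt_negsq q
  have hN := key_num (c * n) (n - 1) (fun r : ℝ × ℝ => -(r.1 ^ 2 + r.2 ^ 2))
      (fun q : ℝ × ℝ => -(2 * q.1)) (fun q : ℝ × ℝ => -(2 * q.2)) q hx hP
  have h := key_div (fun r : ℝ × ℝ => c * n * r.1 ^ (n - 1) * (-(r.1 ^ 2 + r.2 ^ 2)))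
      (fun q : ℝ × ℝ => c * n * ((n - 1) * q.1 ^ (n - 1 - 1) * (-(q.1 ^ 2 + q.2 ^ 2))
        + q.1 ^ (n - 1) * (-(2 * q.1))))
      (fun q : ℝ × ℝ => c * n * (q.1 ^ (n - 1) * (-(2 * q.2)))) (n + 1) q hx hw hN
  have hfun : F1 c n = fun r : ℝ × ℝ =>
      c * n * r.1 ^ (n - 1) * (-(r.1 ^ 2 + r.2 ^ 2)) / (r.1 ^ 2 - r.2 ^ 2) ^ (n + 1) := rfl
  rw [hfun]
  convert h using 1
  have r1 : q.1 ^ (n - 1) = q.1 ^ (n - 1 - 1) * q.1 := rpow_shift q.1 (n - 1) hx.ne'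
  symm
  apply lm_ext <;> simp [Gxx, Gxy] <;> rw [r1] <;> ring

lemma hasFDerivAt_F2 (c n : ℝ) (q : ℝ × ℝ) (hx : 0 < q.1) (hw : 0 < q.1 ^ 2 - q.2 ^ 2) :
    HasFDerivAt (F2 c n) (lm (Gxy c n q) (Gyy c n q)) q := by
  have hP := hasFDerivAt_2y q
  have hN := key_num (c * n) n (fun r : ℝ × ℝ => 2 * r.2)
      (fun _ : ℝ × ℝ => 0) (fun _ : ℝ × ℝ => 2) q hx hP
  have h := key_div (fun r : ℝ × ℝ => c * n * r.1 ^ n * (2 * r.2))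
      (fun q : ℝ × ℝ => c * n * (n * q.1 ^ (n - 1) * (2 * q.2) + q.1 ^ n * 0))
      (fun q : ℝ × ℝ => c * n * (q.1 ^ n * 2)) (n + 1) q hx hw hN
  have hfun : F2 c n = fun r : ℝ × ℝ =>
      c * n * r.1 ^ n * (2 * r.2) / (r.1 ^ 2 - r.2 ^ 2) ^ (n + 1) := rfl
  rw [hfun]
  convert h using 1
  have r2 : q.1 ^ n = q.1 ^ (n - 1) * q.1 := rpow_shift q.1 n hx.ne'
  symm
  apply lm_ext <;> simp [Gxy, Gyy] <;> rw [r2] <;> ring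

lemma psd2 (a b d : ℝ) (ha : 0 ≤ a) (hd : 0 ≤ d) (hdet : b ^ 2 ≤ a * d) :
    (!![a, b; b, d] : Matrix (Fin 2) (Fin 2) ℝ).PosSemidef := by
  rw [Matrix.posSemidef_iff_dotProduct_mulVec]
  constructor
  · ext i j
    fin_cases i <;> fin_cases j <;> simp [Matrix.conjTranspose_apply]
  · intro v
    have hv : star v = v := star_trivial v
    rw [hv]
    simp [dotProduct, Matrix.mulVec, Fin.sum_univ_two]
    set u := v 0
    set t := v 1
    rcases eq_or_lt_of_le ha with h | h
    · have hb : b = 0 := by nlinarith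
      rw [hb, ← h]
      nlinarith [mul_nonneg hd (sq_nonneg t)]
    · nlinarith [sq_nonneg (a * u + b * t), mul_nonneg (sub_nonneg.2 hdet) (sq_nonneg t)]

theorem powers_of_mean_curvature_convex (n : ℝ) (hn : n ≠ 0) (hn1 : -1 ≤ n)
    (K : ℝ × ℝ → ℝ)
    (hK : K = fun q : ℝ × ℝ => Real.sign n * q.1 ^ n / (q.1 ^ 2 - q.2 ^ 2) ^ n) :
    ∀ p : ℝ × ℝ, |p.2| < p.1 → (hessian K p).PosSemidef := by
  subst hK
  intro p hp
  set c := Real.sign n with hc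
  set Kf : ℝ × ℝ → ℝ := fun q : ℝ × ℝ => c * q.1 ^ n / (q.1 ^ 2 - q.2 ^ 2) ^ n with hKf
  have hcn : 0 < c * n := by
    rcases hn.lt_or_gt with h | h
    · rw [hc, Real.sign_of_neg h]; nlinarith
    · rw [hc, Real.sign_of_pos h]; nlinarith
  have hx : 0 < p.1 := (abs_nonneg p.2).trans_lt hp
  have hw : 0 < p.1 ^ 2 - p.2 ^ 2 := by nlinarith [sq_abs p.2, abs_nonneg p.2]
  have hUo : IsOpen {q : ℝ × ℝ | |q.2| < q.1} := isOpen_lt continuous_snd.abs continuous_fst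
  have hmem : {q : ℝ × ℝ | |q.2| < q.1} ∈ nhds p := hUo.mem_nhds hp
  have hpdx : Set.EqOn (pdx Kf) (F1 c n) {q : ℝ × ℝ | |q.2| < q.1} := by
    intro q hq
    have hq' : |q.2| < q.1 := hq
    have hqx : 0 < q.1 := (abs_nonneg q.2).trans_lt hq'
    have hqw : 0 < q.1 ^ 2 - q.2 ^ 2 := by nlinarith [sq_abs q.2, abs_nonneg q.2]
    show fderiv ℝ Kf q (1, 0) = F1 c n q
    rw [hKf, (hasFDerivAt_K c n q hqx hqw).fderiv, lm_apply]
    simp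
  have hpdy : Set.EqOn (pdy Kf) (F2 c n) {q : ℝ × ℝ | |q.2| < q.1} := by
    intro q hq
    have hq' : |q.2| < q.1 := hq
    have hqx : 0 < q.1 := (abs_nonneg q.2).trans_lt hq'
    have hqw : 0 < q.1 ^ 2 - q.2 ^ 2 := by nlinarith [sq_abs q.2, abs_nonneg q.2]
    show fderiv ℝ Kf q (0, 1) = F2 c n q
    rw [hKf, (hasFDerivAt_K c n q hqx hqw).fderiv, lm_apply]
    simp
  have hev1 : pdx Kf =ᶠ[nhds p] F1 c n := Filter.eventuallyEq_of_mem hmem hpdx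
  have hev2 : pdy Kf =ᶠ[nhds p] F2 c n := Filter.eventuallyEq_of_mem hmem hpdy
  have ea : pdx (pdx Kf) p = Gxx c n p := by
    show fderiv ℝ (pdx Kf) p (1, 0) = Gxx c n p
    rw [hev1.fderiv_eq, (hasFDerivAt_F1 c n p hx hw).fderiv, lm_apply]
    simp
  have eb : pdx (pdy Kf) p = Gxy c n p := by
    show fderiv ℝ (pdy Kf) p (1, 0) = Gxy c n p
    rw [hev2.fderiv_eq, (hasFDerivAt_F2 c n p hx hw).fderiv, lm_apply]
    simp
  have ec : pdy (pdx Kf) p = Gxy c n p := by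
    show fderiv ℝ (pdx Kf) p (0, 1) = Gxy c n p
    rw [hev1.fderiv_eq, (hasFDerivAt_F1 c n p hx hw).fderiv, lm_apply]
    simp
  have ed : pdy (pdy Kf) p = Gyy c n p := by
    show fderiv ℝ (pdy Kf) p (0, 1) = Gyy c n p
    rw [hev2.fderiv_eq, (hasFDerivAt_F2 c n p hx hw).fderiv, lm_apply]
    simp
  have hH : hessian Kf p = !![Gxx c n p, Gxy c n p; Gxy c n p, Gyy c n p] := by
    unfold hessian
    rw [ea, eb, ec, ed]
  rw [hH]
  have hXpos : (0:ℝ) < p.1 ^ (n - 1 - 1) := rpow_pos_of_pos hx _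
  have hWpos : (0:ℝ) < (p.1 ^ 2 - p.2 ^ 2) ^ (n + 1 + 1) := rpow_pos_of_pos hw _
  have r1 : p.1 ^ (n - 1) = p.1 ^ (n - 1 - 1) * p.1 := rpow_shift p.1 (n - 1) hx.ne'
  have r2 : p.1 ^ n = p.1 ^ (n - 1) * p.1 := rpow_shift p.1 n hx.ne'
  apply psd2
  · -- 0 ≤ Gxx
    unfold Gxx
    apply div_nonneg _ hWpos.le
    refine mul_nonneg (mul_nonneg hcn.le hXpos.le) ?_
    nlinarith [mul_nonneg (show (0:ℝ) ≤ n + 1 by linarith) (sq_nonneg (p.1 ^ 2 + p.2 ^ 2)),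
      mul_nonneg (sq_nonneg p.2) hw.le]
  · -- 0 ≤ Gyy
    unfold Gyy
    apply div_nonneg _ hWpos.le
    refine mul_nonneg (mul_nonneg hcn.le (rpow_pos_of_pos hx n).le) ?_
    nlinarith [mul_nonneg (show (0:ℝ) ≤ 2 * n + 2 by linarith) (sq_nonneg p.2)]
  · -- discriminant
    unfold Gxx Gxy Gyy
    rw [r2, r1]
    have hRHS : (0:ℝ) ≤ (c * n * p.1 ^ (n - 1 - 1) / (p.1 ^ 2 - p.2 ^ 2) ^ (n + 1 + 1)) ^ 2 *
        (p.1 ^ 2 * (2 * (n + 1) * (p.1 ^ 2 - p.2 ^ 2) ^ 3)) := by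
      refine mul_nonneg (sq_nonneg _) (mul_nonneg (sq_nonneg p.1) ?_)
      exact mul_nonneg (by linarith) (pow_nonneg hw.le 3)
    rw [← sub_nonneg]
    refine hRHS.trans (le_of_eq ?_)
    ring
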